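/- Let d be an even integer ≥ 2, q ≡ 1 (mod d) a prime power, t = (q-1)/d, and T a generator of the character group of F_q^×. Then ∏_{k=1}^{d-1} g(T^{kt}) = q^{(d-2)/2} · g(T^{(d/2)t}) · T^{α'}(-1), where α' = t·d(d-2)/8. -/

import Mathlib

theorem stmt14 {F : Type*} [Field F] [Fintype F]
    (ψ : AddChar F ℂ) (hψ : ψ ≠ 1)
    (q d : ℕ) (hq : q = Fintype.card F) (hd : 2 ≤ d) (hde : Even d) (hdq : d ∣ q - 1)
    (t : ℕ) (ht : t = (q - 1) / d)
    (T : MulChar F ℂ) (hT : ∀ χ : MulChar F ℂ, ∃ k : ℕ, χ = T ^ k) :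
    ∏ k ∈ Finset.Icc 1 (d - 1), gaussSum (T ^ (k * t)) ψ
      = (q : ℂ) ^ ((d - 2) / 2) * gaussSum (T ^ ((d / 2) * t)) ψ *
          (T ^ (t * (d * (d - 2)) / 8)) (-1) := by
  classical
  have hq2 : 2 ≤ q := by rw [hq]; exact Fintype.one_lt_card
  -- d * t = q - 1
  have hdt : d * t = q - 1 := by
    rw [ht]; exact Nat.mul_div_cancel' hdq
  have htpos : 0 < t := by
    rw [ht]
    exact Nat.div_pos (Nat.le_of_dvd (by omega) hdq) (by omega)
  -- order of T
  have hprim : ψ.IsPrimitive := AddChar.IsPrimitive.of_ne_one hψ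
  have hord : orderOf T = q - 1 := by
    have h1 : orderOf T = Nat.card (MulChar F ℂ) :=
      orderOf_eq_card_of_forall_mem_zpowers (fun χ => by
        obtain ⟨k, hk⟩ := hT χ
        exact ⟨(k : ℤ), by simp [zpow_natCast, hk]⟩)
    have hne : NeZero ((Monoid.exponent Fˣ : ℕ) : ℂ) := by
      have : Monoid.exponent Fˣ ≠ 0 := Monoid.exponent_ne_zero_of_finite
      exact ⟨by exact_mod_cast Nat.cast_ne_zero.mpr this⟩
    have h2 : Nat.card (MulChar F ℂ) = Nat.card Fˣ :=
      MulChar.card_eq_card_units_of_hasEnoughRootsOfUnity F ℂ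
    rw [h1, h2, Nat.card_eq_fintype_card, Fintype.card_units, hq]
  have hTq : T ^ (q - 1) = 1 := by rw [← hord]; exact pow_orderOf_eq_one T
  have hne1 : ∀ k : ℕ, 0 < k → k < d → T ^ (k * t) ≠ 1 := by
    intro k hk1 hk2 h
    have : orderOf T ∣ k * t := orderOf_dvd_of_pow_eq_one h
    rw [hord, ← hdt] at this
    have hdk : d ∣ k := (Nat.mul_dvd_mul_iff_right htpos).mp this
    have := Nat.le_of_dvd hk1 hdk
    omega
  -- pairing lemma
  have pair : ∀ χ : MulChar F ℂ, χ ≠ 1 →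
      gaussSum χ ψ * gaussSum χ⁻¹ ψ = χ (-1) * (q : ℂ) := by
    intro χ hχ
    rw [← mul_gaussSum_inv_eq_gaussSum χ⁻¹, mul_left_comm,
      gaussSum_mul_gaussSum_eq_card hχ hprim, MulChar.inv_apply', inv_neg_one, hq]
  -- set up m, e
  obtain ⟨m, hm⟩ := hde
  have hm' : d = 2 * m := by omega
  have hm1 : 1 ≤ m := by omega
  obtain ⟨e, he⟩ : ∃ e, m = e + 1 := ⟨m - 1, by omega⟩
  -- evaluation product lemma
  have evalprod : ∀ s : Finset ℕ,
      (∏ j ∈ s, (T ^ (j * t)) (-1)) = (T ^ ((∑ j ∈ s, j) * t)) (-1) := by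
    intro s
    induction s using Finset.induction_on with
    | empty => simp [MulChar.one_apply (IsUnit.neg isUnit_one)]
    | insert _ _ hx ih =>
        rw [Finset.prod_insert hx, Finset.sum_insert hx, ih, add_mul, pow_add,
          MulChar.mul_apply]
  -- the half sum
  have heven : ∃ c, (e + 1) * e = 2 * c := by
    rcases Nat.even_mul_succ_self e with ⟨c, hc⟩
    exact ⟨c, by rw [Nat.mul_comm]; omega⟩
  obtain ⟨c, hc⟩ := heven
  have hsum : (∑ j ∈ Finset.Ioc 0 e, j) = c := by
    have h1 : (∑ j ∈ Finset.range (e + 1), j) * 2 = (e + 1) * e :=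
      Finset.sum_range_id_mul_two (e + 1)
    have h2 : (∑ j ∈ Finset.range (e + 1), j) = ∑ j ∈ Finset.Ioc 0 e, j := by
      rw [show Finset.range (e + 1) = insert 0 (Finset.Ioc 0 e) from by
        ext x; simp, Finset.sum_insert (by simp), zero_add]
    omega
  -- key pairing on each j
  have hpair_j : ∀ j ∈ Finset.Ioc 0 e,
      gaussSum (T ^ (j * t)) ψ * gaussSum (T ^ ((2 * e + 2 - j) * t)) ψ
        = (T ^ (j * t)) (-1) * (q : ℂ) := by
    intro j hj
    simp only [Finset.mem_Ioc] at hj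
    have hinv : T ^ ((2 * e + 2 - j) * t) = (T ^ (j * t))⁻¹ := by
      apply eq_inv_of_mul_eq_one_left
      rw [← pow_add, show (2 * e + 2 - j) * t + j * t = (2 * e + 2) * t from by
        rw [← add_mul]; congr 1; omega]
      rw [show (2 * e + 2) * t = q - 1 from by rw [← hdt]; congr 1; omega, hTq]
    rw [hinv]
    exact pair _ (hne1 j hj.1 (by omega))
  -- split the product
  have hd1 : d - 1 = 2 * e + 1 := by omega
  have key : ∏ k ∈ Finset.Icc 1 (d - 1), gaussSum (T ^ (k * t)) ψ
      = ((∏ j ∈ Finset.Ioc 0 e, gaussSum (T ^ (j * t)) ψ) *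
          gaussSum (T ^ ((e + 1) * t)) ψ) *
        ∏ j ∈ Finset.Ioc 0 e, gaussSum (T ^ ((2 * e + 2 - j) * t)) ψ := by
    rw [hd1, show Finset.Icc 1 (2 * e + 1) = Finset.Ioc 0 (2 * e + 1) from by
      ext x; simp; omega]
    rw [← Finset.prod_Ioc_consecutive (fun k => gaussSum (T ^ (k * t)) ψ)
      (Nat.zero_le (e + 1)) (by omega : e + 1 ≤ 2 * e + 1)]
    congr 1
    · exact Finset.prod_Ioc_succ_top (Nat.zero_le e) _
    · refine Finset.prod_bij' (fun j _ => 2 * e + 2 - j) (fun k _ => 2 * e + 2 - k)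
        ?_ ?_ ?_ ?_ ?_
      · intro a ha; simp only [Finset.mem_Ioc] at ha ⊢; omega
      · intro a ha; simp only [Finset.mem_Ioc] at ha ⊢; omega
      · intro a ha; simp only [Finset.mem_Ioc] at ha; omega
      · intro a ha; simp only [Finset.mem_Ioc] at ha; omega
      · intro a ha; simp only [Finset.mem_Ioc] at ha
        rw [show 2 * e + 2 - (2 * e + 2 - a) = a from by omega]
  rw [key, mul_comm _ (gaussSum (T ^ ((e + 1) * t)) ψ), mul_assoc,
    ← Finset.prod_mul_distrib, Finset.prod_congr rfl hpair_j, Finset.prod_mul_distrib,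
    evalprod, hsum, Finset.prod_const, Nat.card_Ioc]
  have hexp1 : (d - 2) / 2 = e := by omega
  have hexp2 : d / 2 * t = (e + 1) * t := by congr 1; omega
  have hexp3 : t * (d * (d - 2)) / 8 = c * t := by
    have h8 : d * (d - 2) = 8 * c := by
      have hd2 : d - 2 = 2 * e := by omega
      rw [hd2, hm', he, show 2 * (e + 1) * (2 * e) = 4 * ((e + 1) * e) from by ring, hc]
      ring
    rw [h8, show t * (8 * c) = c * t * 8 from by ring, Nat.mul_div_cancel _ (by norm_num)]
  rw [hexp1, hexp2, hexp3]
  simp only [Nat.sub_zero]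
  ring
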